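/- Let p be an odd prime and write p - 1 = 2^a · r with r odd and a = ν₂(p-1). Then 2p · σ_k(2p) ≡ 2 (mod φ(2p)) if and only if p ≡ 3 (mod 4) and r divides 2^{k+1} + 1. -/

import Mathlib

open ArithmeticFunction in
theorem stmt_4 (p k a r : ℕ) (hp : p.Prime) (hodd : Odd p)
    (ha : a = (p - 1).factorization 2) (hr : Odd r) (hpr : p - 1 = 2 ^ a * r) :
    (2 * p) * (∑ d ∈ (2 * p).divisors, d ^ k) ≡ 2 [MOD (2 * p).totient] ↔
      p % 4 = 3 ∧ r ∣ 2 ^ (k + 1) + 1 := by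
  have hp3 : 3 ≤ p := by
    rcases hodd with ⟨t, ht⟩; have := hp.two_le; omega
  have hcop : Nat.Coprime 2 p := Nat.coprime_two_left.mpr hodd
  have htot : (2 * p).totient = p - 1 := by
    rw [Nat.totient_mul hcop, Nat.totient_two, one_mul, Nat.totient_prime hp]
  have hS : (∑ d ∈ (2 * p).divisors, d ^ k) = (1 + 2 ^ k) * (1 + p ^ k) := by
    rw [← sigma_apply, isMultiplicative_sigma.map_mul_of_coprime hcop]
    have h2 : sigma k 2 = 1 + 2 ^ k := by
      rw [sigma_apply, Nat.Prime.divisors Nat.prime_two,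
        Finset.sum_pair (by norm_num), one_pow]
    have hpk : sigma k p = 1 + p ^ k := by
      rw [sigma_apply, hp.divisors, Finset.sum_pair (by omega), one_pow]
    rw [h2, hpk]
  rw [htot, hS]
  have hp1 : 1 ≡ p [MOD p - 1] := (Nat.modEq_iff_dvd' (by omega)).mpr dvd_rfl
  have key : 2 * ((1 + 2 ^ k) * 2) ≡ (2 * p) * ((1 + 2 ^ k) * (1 + p ^ k)) [MOD p - 1] := by
    have hpk : (1 : ℕ) + 1 ≡ 1 + p ^ k [MOD p - 1] := by
      have := hp1.pow k
      simpa using (Nat.ModEq.refl 1).add this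
    have h2p : (2 : ℕ) * 1 ≡ 2 * p [MOD p - 1] := (Nat.ModEq.refl 2).mul hp1
    simpa using h2p.mul ((Nat.ModEq.refl (1 + 2 ^ k)).mul hpk)
  have step1 : ((2 * p) * ((1 + 2 ^ k) * (1 + p ^ k)) ≡ 2 [MOD p - 1]) ↔
      (2 * ((1 + 2 ^ k) * 2) ≡ 2 [MOD p - 1]) :=
    ⟨fun h => key.trans h, fun h => key.symm.trans h⟩
  rw [step1]
  have step2 : (2 * ((1 + 2 ^ k) * 2) ≡ 2 [MOD p - 1]) ↔ p - 1 ∣ 2 * (2 ^ (k + 1) + 1) := by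
    rw [Nat.ModEq.comm, Nat.modEq_iff_dvd' (by nlinarith [pow_pos (by norm_num : (0:ℕ) < 2) k])]
    have h21 : 2 ^ (k + 1) = 2 * 2 ^ k := by ring
    constructor <;> intro h <;>
      · convert h using 1; omega
  rw [step2]
  have hm : Odd (2 ^ (k + 1) + 1) := by
    have : 2 ^ (k + 1) = 2 * 2 ^ k := by ring
    exact ⟨2 ^ k, by omega⟩
  have ha1 : 1 ≤ a := by
    by_contra h
    interval_cases a
    · rcases hr with ⟨s, hs⟩; rcases hodd with ⟨t, ht⟩; omega
  have hmod4 : p % 4 = 3 ↔ a = 1 := by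
    constructor
    · intro h
      by_contra h2
      have ha2 : 2 ≤ a := by omega
      have h4 : (4 : ℕ) ∣ p - 1 := by
        rw [hpr]
        calc (4:ℕ) = 2 ^ 2 := by norm_num
        _ ∣ 2 ^ a := pow_dvd_pow 2 ha2
        _ ∣ 2 ^ a * r := Dvd.intro r rfl
      rcases h4 with ⟨c, hc⟩
      omega
    · intro h
      rw [h] at hpr
      rcases hr with ⟨s, hs⟩
      omega
  rw [hpr, hmod4]
  constructor
  · intro h
    have hrd : r ∣ 2 ^ (k + 1) + 1 := by
      have hr2 : r ∣ 2 * (2 ^ (k + 1) + 1) := dvd_trans (Dvd.intro_left _ rfl) h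
      have : Nat.Coprime r 2 := Nat.coprime_two_right.mpr hr
      exact Nat.Coprime.dvd_of_dvd_mul_left this hr2
    refine ⟨?_, hrd⟩
    by_contra h2
    have ha2 : 2 ≤ a := by omega
    have h4 : (4 : ℕ) ∣ 2 * (2 ^ (k + 1) + 1) := by
      calc (4:ℕ) = 2 ^ 2 := by norm_num
      _ ∣ 2 ^ a := pow_dvd_pow 2 ha2
      _ ∣ 2 ^ a * r := Dvd.intro r rfl
      _ ∣ _ := h
    rcases h4 with ⟨c, hc⟩
    rcases hm with ⟨s, hs⟩
    omega
  · rintro ⟨ha', hrd⟩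
    rw [ha']
    rcases hrd with ⟨c, hc⟩
    exact ⟨c, by rw [hc]; ring⟩
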